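/- Let m ≥ 1 and let f : ℝ^m → ℝ^m be C² and homogeneous of degree 5. Let ω ∈ ℝ^m, ω ≠ 0, be a defocusing direction for f, i.e. (f(u)·ω)(u·ω) ≤ 0 for every u ∈ ℝ^m. Let u : (0, ∞) → ℝ^m be a C² solution of u''(r) + (2/r) u'(r) + f(u(r)) = 0 such that ∫_0^1 |u'(r)|² r² dr < ∞, and such that for some θ ∈ ℝ^m, lim_{r→∞} r·u(r) = θ and lim_{r→∞} r² u'(r) = −θ. Then ω · θ = 0. -/

import Mathlib

open Set Filter MeasureTheory
open scoped RealInnerProductSpace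

set_option maxHeartbeats 4000000 in
/-- Proposition 3.13: the asymptotic profile `θ` of a finite-energy radial stationary
solution is orthogonal to every defocusing direction `ω` of the nonlinearity. -/
theorem stmt9 (m : ℕ) (hm : 1 ≤ m)
    (f : EuclideanSpace ℝ (Fin m) → EuclideanSpace ℝ (Fin m))
    (hf : ContDiff ℝ 2 f)
    (hhom : ∀ c : ℝ, 0 ≤ c → ∀ x, f (c • x) = c ^ 5 • f x)
    (ω : EuclideanSpace ℝ (Fin m)) (hω : ω ≠ 0)
    (hdefoc : ∀ x : EuclideanSpace ℝ (Fin m), ⟪f x, ω⟫ * ⟪x, ω⟫ ≤ 0)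
    (u u' u'' : ℝ → EuclideanSpace ℝ (Fin m))
    (hud : ∀ r : ℝ, 0 < r → HasDerivAt u (u' r) r)
    (hud' : ∀ r : ℝ, 0 < r → HasDerivAt u' (u'' r) r)
    (hu'' : ContinuousOn u'' (Ioi 0))
    (hode : ∀ r : ℝ, 0 < r → u'' r + (2 / r) • u' r + f (u r) = 0)
    (hH1 : IntegrableOn (fun r : ℝ => ‖u' r‖ ^ 2 * r ^ 2) (Ioo 0 1))
    (θ : EuclideanSpace ℝ (Fin m))
    (hulim : Tendsto (fun r : ℝ => r • u r) atTop (nhds θ))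
    (hu'lim : Tendsto (fun r : ℝ => (r ^ 2) • u' r) atTop (nhds (-θ))) :
    ⟪ω, θ⟫ = 0 := by
  classical
  set h : ℝ → ℝ := fun r => ⟪u r, ω⟫ with hhdef
  set h' : ℝ → ℝ := fun r => ⟪u' r, ω⟫ with hh'def
  set F : ℝ → ℝ := fun r => ⟪f (u r), ω⟫ with hFdef
  set Q : ℝ → ℝ := fun r => r ^ 2 * h' r * h r with hQdef
  -- derivatives of the scalar quantities
  have hder : ∀ r : ℝ, 0 < r → HasDerivAt h (h' r) r := by
    intro r hr
    have := (hud r hr).inner ℝ (hasDerivAt_const r ω)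
    simpa using this
  have hder' : ∀ r : ℝ, 0 < r → HasDerivAt h' (⟪u'' r, ω⟫) r := by
    intro r hr
    have := (hud' r hr).inner ℝ (hasDerivAt_const r ω)
    simpa using this
  -- scalar ODE
  have hodeS : ∀ r : ℝ, 0 < r → ⟪u'' r, ω⟫ = -(2 / r * h' r) - F r := by
    intro r hr
    have h0 := hode r hr
    have : ⟪u'' r + (2 / r) • u' r + f (u r), ω⟫ = 0 := by rw [h0]; simp
    simp only [inner_add_left, real_inner_smul_left] at this
    simp only [hh'def, hFdef]
    linarith
  -- derivative of Q
  have hQder : ∀ r : ℝ, 0 < r →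
      HasDerivAt Q (r ^ 2 * h' r ^ 2 - r ^ 2 * (F r * h r)) r := by
    intro r hr
    have h1 : HasDerivAt (fun s : ℝ => s ^ 2 * h' s)
        (2 * r * h' r + r ^ 2 * ⟪u'' r, ω⟫) r := by
      have := (hasDerivAt_pow 2 r).mul (hder' r hr)
      refine this.congr_deriv ?_
      norm_num
    have h2 := h1.mul (hder r hr)
    have heq : (2 * r * h' r + r ^ 2 * ⟪u'' r, ω⟫) * h r + r ^ 2 * h' r * h' r
        = r ^ 2 * h' r ^ 2 - r ^ 2 * (F r * h r) := by
      rw [hodeS r hr]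
      field_simp
      ring
    rw [heq] at h2
    exact h2
  have hQderiv_nonneg : ∀ r : ℝ, 0 < r →
      0 ≤ r ^ 2 * h' r ^ 2 - r ^ 2 * (F r * h r) := by
    intro r hr
    have hd := hdefoc (u r)
    have hFh : F r * h r ≤ 0 := hd
    nlinarith [sq_nonneg (r * h' r), sq_nonneg r]
  -- Q is monotone on (0, ∞)
  have hmono : MonotoneOn Q (Ioi (0:ℝ)) := by
    apply monotoneOn_of_deriv_nonneg (convex_Ioi 0)
    · intro r hr
      exact ((hQder r hr).continuousAt).continuousWithinAt
    · rw [interior_Ioi]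
      intro r hr
      exact ((hQder r hr).differentiableAt).differentiableWithinAt
    · rw [interior_Ioi]
      intro r hr
      rw [(hQder r hr).deriv]
      exact hQderiv_nonneg r hr
  -- u tends to 0 at infinity
  have hulim0 : Tendsto u atTop (nhds 0) := by
    have h1 : Tendsto (fun r : ℝ => r⁻¹ • (r • u r)) atTop (nhds ((0:ℝ) • θ)) :=
      tendsto_inv_atTop_zero.smul hulim
    rw [zero_smul] at h1
    apply h1.congr'
    filter_upwards [eventually_gt_atTop (0:ℝ)] with r hr
    rw [smul_smul, inv_mul_cancel₀ hr.ne', one_smul]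
  -- Q tends to 0 at infinity
  have hQ0 : Tendsto Q atTop (nhds 0) := by
    have h1 : Tendsto (fun r : ℝ => ⟪(r ^ 2) • u' r, ω⟫) atTop (nhds ⟪-θ, ω⟫) :=
      hu'lim.inner tendsto_const_nhds
    have h2 : Tendsto h atTop (nhds (0:ℝ)) := by
      have h2' : Tendsto (fun r : ℝ => (⟪u r, ω⟫ : ℝ)) atTop
          (nhds ⟪(0 : EuclideanSpace ℝ (Fin m)), ω⟫) := hulim0.inner tendsto_const_nhds
      simpa using h2'
    have h3 := h1.mul h2
    rw [mul_zero] at h3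
    apply h3.congr
    intro r
    simp only [hQdef, hh'def, real_inner_smul_left]
  -- Q is nonpositive
  have hQle : ∀ r : ℝ, 0 < r → Q r ≤ 0 := by
    intro r hr
    refine ge_of_tendsto hQ0 ?_
    filter_upwards [eventually_ge_atTop r] with s hs
    exact hmono hr (lt_of_lt_of_le hr hs) hs
  clear_value h h' F Q
  -- Q is nonnegative (the hard part)
  have hQge : ∀ r : ℝ, 0 < r → 0 ≤ Q r := by
    by_contra hcon
    push_neg at hcon
    obtain ⟨r₀, hr₀, hneg⟩ := hcon
    set c : ℝ := -Q r₀ with hcdef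
    have hc : 0 < c := by simp only [hcdef]; linarith
    -- continuity of the scalar functions on (0,∞)
    have hconth : ContinuousOn h (Ioi 0) :=
      fun s hs => ((hder s hs).continuousAt).continuousWithinAt
    have hconth' : ContinuousOn h' (Ioi 0) :=
      fun s hs => ((hder' s hs).continuousAt).continuousWithinAt
    -- the energy integrand
    set w : ℝ → ℝ := fun s => s ^ 2 * h' s ^ 2 with hwdef
    have hwnn : ∀ s, 0 ≤ w s := fun s => by positivity
    have hcontw : ContinuousOn w (Ioi 0) :=
      (continuousOn_id.pow 2).mul (hconth'.pow 2)
    have hwint : IntegrableOn w (Ioo 0 1) := by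
      apply Integrable.mono' (hH1.const_mul (‖ω‖ ^ 2))
      · exact (hcontw.mono (Ioo_subset_Ioi_self)).aestronglyMeasurable measurableSet_Ioo
      · filter_upwards [ae_restrict_mem measurableSet_Ioo] with s hs
        have hcs : |h' s| ≤ ‖u' s‖ * ‖ω‖ := by
          simp only [hh'def]
          exact abs_real_inner_le_norm (u' s) ω
        have hcs2 : |h' s| * |h' s| ≤ (‖u' s‖ * ‖ω‖) * (‖u' s‖ * ‖ω‖) :=
          mul_le_mul hcs hcs (abs_nonneg _) (by positivity)
        have h1 : ‖w s‖ = s ^ 2 * h' s ^ 2 := by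
          rw [Real.norm_eq_abs, abs_of_nonneg (hwnn s)]
        rw [h1]
        nlinarith [sq_nonneg s, sq_abs (h' s)]
    -- choose a small radius with small energy
    set a : ℝ := min r₀ 1 with hadef
    have ha : 0 < a := lt_min hr₀ one_pos
    have htend : Tendsto (fun n : ℕ => ∫ s in Ioo (0:ℝ) (a / (n + 1)), w s) atTop (nhds 0) := by
      have hanti : Antitone (fun n : ℕ => Ioo (0:ℝ) (a / (n + 1))) := by
        intro i j hij
        apply Ioo_subset_Ioo le_rfl
        have hcast : (i:ℝ) + 1 ≤ (j:ℝ) + 1 := by exact_mod_cast Nat.succ_le_succ hij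
        gcongr
      have hfi : ∃ n : ℕ, IntegrableOn w (Ioo (0:ℝ) (a / (n + 1))) := by
        refine ⟨0, hwint.mono_set (Ioo_subset_Ioo le_rfl ?_)⟩
        norm_num
        exact min_le_right r₀ 1
      have hres := tendsto_setIntegral_of_antitone (fun n => measurableSet_Ioo) hanti hfi
      have hempty : (⋂ n : ℕ, Ioo (0:ℝ) (a / (n + 1))) = ∅ := by
        ext x
        simp only [mem_iInter, mem_Ioo, mem_empty_iff_false, iff_false, not_forall]
        by_contra hx
        push_neg at hx
        obtain ⟨n, hn⟩ := exists_nat_gt (a / x)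
        have hx0 := (hx 0).1
        have hxn := (hx n).2
        have h2 : a / x < (n:ℝ) + 1 := hn.trans (lt_add_one _)
        rw [div_lt_iff₀ hx0] at h2
        rw [lt_div_iff₀ (by positivity : (0:ℝ) < (n:ℝ) + 1)] at hxn
        nlinarith
      rw [hempty] at hres
      simpa using hres
    obtain ⟨n, hn⟩ := (htend.eventually_lt_const (by positivity : (0:ℝ) < c / 4)).exists
    set r₁ : ℝ := a / (n + 1) with hr₁def
    have hr₁ : 0 < r₁ := by positivity
    have hr₁a : r₁ ≤ a := by
      rw [hr₁def]
      apply div_le_self ha.le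
      have := Nat.cast_nonneg (α := ℝ) n
      linarith
    have hr₁r₀ : r₁ ≤ r₀ := hr₁a.trans (min_le_left _ _)
    have hr₁1 : r₁ ≤ 1 := hr₁a.trans (min_le_right _ _)
    have hE : ∫ s in Ioo (0:ℝ) r₁, w s < c / 4 := hn
    have hwint₁ : IntegrableOn w (Ioo 0 r₁) := hwint.mono_set (Ioo_subset_Ioo le_rfl hr₁1)
    clear_value r₁ a w
    -- Q ≤ -c on (0, r₁]
    have hQbd : ∀ s : ℝ, 0 < s → s ≤ r₁ → Q s ≤ -c := by
      intro s hs hsr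
      have := hmono (mem_Ioi.2 hs) (mem_Ioi.2 hr₀) (hsr.trans hr₁r₀)
      simp only [hcdef]
      linarith
    clear_value c
    -- notation for square roots
    set γ : ℝ := Real.sqrt c with hγdef
    have hγ : 0 < γ := Real.sqrt_pos.2 hc
    have hγ2 : γ ^ 2 = c := Real.sq_sqrt hc.le
    set β : ℝ := γ / 4 with hβdef
    have hβ : 0 < β := by rw [hβdef]; positivity
    clear_value γ β
    set K : ℝ := h r₁ ^ 2 + 2 * c / r₁ with hKdef
    have hK : 0 < K := by
      rw [hKdef]
      have h2 : 0 < 2 * c / r₁ := div_pos (by linarith) hr₁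
      nlinarith [sq_nonneg (h r₁)]
    clear_value K
    set ε : ℝ := min (r₁ / 2) (7 * c / (16 * K)) with hεdef
    have hε : 0 < ε := by
      rw [hεdef]
      exact lt_min (by linarith) (div_pos (by linarith) (by linarith))
    have hεr₁ : ε < r₁ := by
      have h1 : ε ≤ r₁ / 2 := by rw [hεdef]; exact min_le_left _ _
      linarith
    have hεK : ε * K ≤ 7 * c / 16 := by
      have h1 : ε ≤ 7 * c / (16 * K) := by rw [hεdef]; exact min_le_right _ _
      have h2 : ε * K ≤ (7 * c / (16 * K)) * K := mul_le_mul_of_nonneg_right h1 hK.le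
      have h3 : (7 * c / (16 * K)) * K = 7 * c / 16 := by
        rw [← div_div, div_mul_cancel₀ _ hK.ne']
      linarith
    clear_value ε
    -- the interval [ε, r₁] sits inside (0, ∞)
    have hsubIcc : Icc ε r₁ ⊆ Ioi 0 := fun s hs => lt_of_lt_of_le hε hs.1
    have huIcc : uIcc ε r₁ = Icc ε r₁ := uIcc_of_le hεr₁.le
    have hch : ContinuousOn h (Icc ε r₁) := hconth.mono hsubIcc
    have hch' : ContinuousOn h' (Icc ε r₁) := hconth'.mono hsubIcc
    -- FTC for h²
    have ftc1 : ∫ s in ε..r₁, 2 * h s * h' s = h r₁ ^ 2 - h ε ^ 2 := by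
      apply intervalIntegral.integral_eq_sub_of_hasDerivAt (f := fun s => h s ^ 2)
      · intro s hs
        rw [huIcc] at hs
        have hs0 : 0 < s := hsubIcc hs
        have := (hder s hs0).pow 2
        refine this.congr_deriv ?_
        norm_num
      · apply ContinuousOn.intervalIntegrable
        rw [huIcc]
        exact (continuousOn_const.mul hch).mul hch'
    -- FTC for the comparison integrand
    have ftc2 : ∫ s in ε..r₁, 2 * c * (-(s ^ 2)⁻¹) = 2 * c * r₁⁻¹ - 2 * c * ε⁻¹ := by
      apply intervalIntegral.integral_eq_sub_of_hasDerivAt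
        (f := fun s : ℝ => 2 * c * s⁻¹)
      · intro s hs
        rw [huIcc] at hs
        have hs0 : 0 < s := hsubIcc hs
        exact (hasDerivAt_inv hs0.ne').const_mul (2 * c)
      · apply ContinuousOn.intervalIntegrable
        rw [huIcc]
        intro s hs
        have hs0 : s ≠ 0 := (hsubIcc hs).ne'
        exact (continuousAt_const.mul (((continuousAt_id.pow 2).inv₀
          (pow_ne_zero 2 hs0)).neg)).continuousWithinAt
    -- comparison
    have hmono2 : ∫ s in ε..r₁, 2 * h s * h' s ≤ ∫ s in ε..r₁, 2 * c * (-(s ^ 2)⁻¹) := by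
      apply intervalIntegral.integral_mono_on hεr₁.le
      · apply ContinuousOn.intervalIntegrable
        rw [huIcc]
        exact (continuousOn_const.mul hch).mul hch'
      · apply ContinuousOn.intervalIntegrable
        rw [huIcc]
        intro s hs
        have hs0 : s ≠ 0 := (hsubIcc hs).ne'
        exact (continuousAt_const.mul (((continuousAt_id.pow 2).inv₀
          (pow_ne_zero 2 hs0)).neg)).continuousWithinAt
      · intro s hs
        have hs0 : 0 < s := hsubIcc hs
        have hs2 : (0:ℝ) < s ^ 2 := by positivity
        have hQs : Q s ≤ -c := hQbd s hs0 hs.2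
        simp only [hQdef] at hQs
        have h2 : (2 * h s * h' s) * s ^ 2 ≤ 2 * c * (-1) := by nlinarith
        calc 2 * h s * h' s = ((2 * h s * h' s) * s ^ 2) / s ^ 2 := by field_simp
          _ ≤ (2 * c * (-1)) / s ^ 2 := (div_le_div_iff_of_pos_right hs2).mpr h2
          _ = 2 * c * (-(s ^ 2)⁻¹) := by field_simp
    have key1 : h r₁ ^ 2 + 2 * c / ε - 2 * c / r₁ ≤ h ε ^ 2 := by
      rw [ftc1, ftc2] at hmono2
      rw [div_eq_mul_inv, div_eq_mul_inv]
      linarith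
    -- FTC for h
    have ftc3 : ∫ s in ε..r₁, h' s = h r₁ - h ε := by
      apply intervalIntegral.integral_eq_sub_of_hasDerivAt (f := h)
      · intro s hs
        rw [huIcc] at hs
        exact hder s (hsubIcc hs)
      · apply ContinuousOn.intervalIntegrable
        rw [huIcc]
        exact hch'
    -- continuity facts on [ε, r₁]
    have hcontw' : ContinuousOn w (Icc ε r₁) := hcontw.mono hsubIcc
    have hcontp : ContinuousOn (fun s : ℝ => (s * Real.sqrt s)⁻¹) (Icc ε r₁) := by
      apply ContinuousOn.inv₀
      · exact continuousOn_id.mul (Real.continuous_sqrt.continuousOn)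
      · intro s hs
        have hs0 : 0 < s := hsubIcc hs
        positivity
    have hintw : IntervalIntegrable w volume ε r₁ := by
      apply ContinuousOn.intervalIntegrable
      rw [huIcc]; exact hcontw'
    have hintp : IntervalIntegrable (fun s : ℝ => (s * Real.sqrt s)⁻¹) volume ε r₁ := by
      apply ContinuousOn.intervalIntegrable
      rw [huIcc]; exact hcontp
    have hsqε : 0 < Real.sqrt ε := Real.sqrt_pos.2 hε
    -- pointwise AM–GM bound for |h'|
    have hptw : ∀ s ∈ Icc ε r₁, |h' s|
        ≤ (2 * β * Real.sqrt ε)⁻¹ * w s + β / 2 * (s * Real.sqrt s)⁻¹ := by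
      intro s hs
      have hs0 : 0 < s := hsubIcc hs
      have hp : 0 < s * Real.sqrt s := by positivity
      have hsq : Real.sqrt ε ≤ Real.sqrt s := Real.sqrt_le_sqrt hs.1
      have hss : Real.sqrt s * Real.sqrt s = s := Real.mul_self_sqrt hs0.le
      have hamgm : |h' s| ≤ (s * Real.sqrt s) * h' s ^ 2 / (2 * β)
          + β / (2 * (s * Real.sqrt s)) := by
        rw [div_add_div _ _ (by positivity) (by positivity), le_div_iff₀ (by positivity)]
        rcases abs_cases (h' s) with ⟨heq, _⟩ | ⟨heq, _⟩ <;> rw [heq] <;>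
          nlinarith [sq_nonneg ((s * Real.sqrt s) * h' s - β),
            sq_nonneg ((s * Real.sqrt s) * h' s + β)]
      have hpS : (s * Real.sqrt s) * Real.sqrt ε ≤ s ^ 2 := by
        have h1 : (s * Real.sqrt s) * Real.sqrt ε ≤ (s * Real.sqrt s) * Real.sqrt s :=
          mul_le_mul_of_nonneg_left hsq (by positivity)
        have h2 : (s * Real.sqrt s) * Real.sqrt s = s ^ 2 := by
          rw [mul_assoc, hss]; ring
        linarith
      have hterm1 : (s * Real.sqrt s) * h' s ^ 2 / (2 * β)
          ≤ (2 * β * Real.sqrt ε)⁻¹ * w s := by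
        simp only [hwdef]
        rw [show (2 * β * Real.sqrt ε)⁻¹ * (s ^ 2 * h' s ^ 2)
            = s ^ 2 * h' s ^ 2 / (2 * β * Real.sqrt ε) by rw [div_eq_mul_inv]; ring]
        rw [div_le_div_iff₀ (by positivity) (by positivity)]
        nlinarith [mul_le_mul_of_nonneg_right hpS
          (mul_nonneg (by linarith [hβ] : (0:ℝ) ≤ 2 * β) (sq_nonneg (h' s)))]
      have hterm2 : β / (2 * (s * Real.sqrt s)) = β / 2 * (s * Real.sqrt s)⁻¹ := by
        rw [div_eq_mul_inv, mul_inv, div_eq_mul_inv, mul_assoc]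
      linarith [hamgm, hterm1, hterm2.le, hterm2.ge]
    -- bound the integral of |h'|
    have habs : |h r₁ - h ε| ≤ (2 * β * Real.sqrt ε)⁻¹ * (∫ s in ε..r₁, w s)
        + β / 2 * (∫ s in ε..r₁, (s * Real.sqrt s)⁻¹) := by
      rw [← ftc3]
      calc |∫ s in ε..r₁, h' s| ≤ ∫ s in ε..r₁, |h' s| :=
            intervalIntegral.abs_integral_le_integral_abs hεr₁.le
        _ ≤ ∫ s in ε..r₁, ((2 * β * Real.sqrt ε)⁻¹ * w s + β / 2 * (s * Real.sqrt s)⁻¹) := by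
            apply intervalIntegral.integral_mono_on hεr₁.le
            · apply ContinuousOn.intervalIntegrable
              rw [huIcc]; exact hch'.abs
            · exact (hintw.const_mul _).add (hintp.const_mul _)
            · exact hptw
        _ = (2 * β * Real.sqrt ε)⁻¹ * (∫ s in ε..r₁, w s)
            + β / 2 * (∫ s in ε..r₁, (s * Real.sqrt s)⁻¹) := by
            rw [intervalIntegral.integral_add (hintw.const_mul _) (hintp.const_mul _),
              intervalIntegral.integral_const_mul, intervalIntegral.integral_const_mul]
    -- the energy integral is small
    have hI1 : ∫ s in ε..r₁, w s ≤ c / 4 := by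
      have e1 : ∫ s in ε..r₁, w s = ∫ s in Ioo ε r₁, w s := by
        rw [intervalIntegral.integral_of_le hεr₁.le, integral_Ioc_eq_integral_Ioo]
      have e2 : ∫ s in Ioo ε r₁, w s ≤ ∫ s in Ioo 0 r₁, w s :=
        setIntegral_mono_set hwint₁ (ae_of_all _ hwnn)
          ((Ioo_subset_Ioo hε.le le_rfl).eventuallyLE)
      linarith [hE]
    -- the weight integral
    have hI2 : ∫ s in ε..r₁, (s * Real.sqrt s)⁻¹ ≤ 2 * (Real.sqrt ε)⁻¹ := by
      have ftc4 : ∫ s in ε..r₁, (s * Real.sqrt s)⁻¹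
          = (-2) * (Real.sqrt r₁)⁻¹ - (-2) * (Real.sqrt ε)⁻¹ := by
        apply intervalIntegral.integral_eq_sub_of_hasDerivAt
          (f := fun s : ℝ => (-2) * (Real.sqrt s)⁻¹)
        · intro s hs
          rw [huIcc] at hs
          have hs0 : 0 < s := hsubIcc hs
          have hsq0 : Real.sqrt s ≠ 0 := (Real.sqrt_pos.2 hs0).ne'
          have h1 := ((Real.hasDerivAt_sqrt hs0.ne').inv hsq0).const_mul (-2 : ℝ)
          refine h1.congr_deriv ?_
          rw [Real.sq_sqrt hs0.le]
          have hss : Real.sqrt s * Real.sqrt s = s := Real.mul_self_sqrt hs0.le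
          field_simp
        · exact hintp
      have hsr : 0 < Real.sqrt r₁ := Real.sqrt_pos.2 hr₁
      have : (0:ℝ) ≤ (Real.sqrt r₁)⁻¹ := by positivity
      rw [ftc4]
      linarith
    -- putting the bounds together
    have hItotal : |h r₁ - h ε| ≤ 3 / 4 * γ / Real.sqrt ε := by
      have hb1 : (2 * β * Real.sqrt ε)⁻¹ * (∫ s in ε..r₁, w s)
          ≤ (2 * β * Real.sqrt ε)⁻¹ * (c / 4) :=
        mul_le_mul_of_nonneg_left hI1 (by positivity)
      have hb2 : β / 2 * (∫ s in ε..r₁, (s * Real.sqrt s)⁻¹)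
          ≤ β / 2 * (2 * (Real.sqrt ε)⁻¹) :=
        mul_le_mul_of_nonneg_left hI2 (by positivity)
      have hb3 : (2 * β * Real.sqrt ε)⁻¹ * (c / 4) + β / 2 * (2 * (Real.sqrt ε)⁻¹)
          = 3 / 4 * γ / Real.sqrt ε := by
        rw [hβdef, ← hγ2]
        field_simp
        ring
      linarith [habs]
    -- upper bound for h ε ^ 2
    have hup : h ε ^ 2 ≤ 2 * h r₁ ^ 2 + 9 / 8 * (c / ε) := by
      have h1 : |h ε| ≤ |h r₁| + 3 / 4 * γ / Real.sqrt ε := by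
        have ht := abs_sub_abs_le_abs_sub (h ε) (h r₁)
        rw [abs_sub_comm] at ht
        linarith [hItotal]
      have h2 : (3 / 4 * γ / Real.sqrt ε) ^ 2 = 9 / 16 * (c / ε) := by
        have h3 : (3 / 4 * γ) ^ 2 = 9 / 16 * c := by rw [mul_pow, hγ2]; norm_num
        rw [div_pow, h3, Real.sq_sqrt hε.le]
        ring
      have h4 : h ε ^ 2 ≤ (|h r₁| + 3 / 4 * γ / Real.sqrt ε) ^ 2 := by
        rw [← sq_abs (h ε)]
        exact pow_le_pow_left₀ (abs_nonneg _) h1 2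
      have h5 : (|h r₁| + 3 / 4 * γ / Real.sqrt ε) ^ 2
          ≤ 2 * h r₁ ^ 2 + 2 * (3 / 4 * γ / Real.sqrt ε) ^ 2 := by
        rw [← sq_abs (h r₁)]
        nlinarith [sq_nonneg (|h r₁| - 3 / 4 * γ / Real.sqrt ε)]
      rw [h2] at h5
      linarith
    -- final contradiction
    have hdiv : 7 / 8 * c / ε ≤ K := by
      rw [hKdef]
      have hring : 2 * c / ε - 9 / 8 * (c / ε) = 7 / 8 * c / ε := by ring
      linarith [key1, hup]
    rw [div_le_iff₀ hε] at hdiv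
    nlinarith [hεK, hc]
  -- hence Q vanishes identically, so h' vanishes
  have hh'zero : ∀ r : ℝ, 0 < r → h' r = 0 := by
    intro r hr
    have hQz : Q =ᶠ[nhds r] fun _ => 0 := by
      filter_upwards [isOpen_Ioi.mem_nhds hr] with s hs
      exact le_antisymm (hQle s hs) (hQge s hs)
    have hz : HasDerivAt Q 0 r := (hasDerivAt_const r (0:ℝ)).congr_of_eventuallyEq hQz
    have hu := (hQder r hr).unique hz
    have hFh : F r * h r ≤ 0 := by
      simp only [hFdef, hhdef]
      exact hdefoc (u r)
    have hr2 : (0:ℝ) < r ^ 2 := by positivity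
    have h1 : r ^ 2 * h' r ^ 2 ≤ 0 := by nlinarith [mul_nonneg hr2.le (neg_nonneg.2 hFh)]
    have h2 : h' r ^ 2 = 0 := le_antisymm (by nlinarith [hr2, mul_pos hr hr]) (sq_nonneg _)
    exact pow_eq_zero_iff two_ne_zero |>.mp h2
  -- conclude
  have hfinal : Tendsto (fun r : ℝ => ⟪(r ^ 2) • u' r, ω⟫) atTop (nhds ⟪-θ, ω⟫) :=
    hu'lim.inner tendsto_const_nhds
  have hzero : Tendsto (fun r : ℝ => ⟪(r ^ 2) • u' r, ω⟫) atTop (nhds 0) := by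
    apply tendsto_const_nhds.congr'
    filter_upwards [eventually_gt_atTop (0:ℝ)] with r hr
    have hz := hh'zero r hr
    simp only [hh'def] at hz
    rw [real_inner_smul_left, hz, mul_zero]
  have : ⟪-θ, ω⟫ = (0:ℝ) := tendsto_nhds_unique hfinal hzero
  rw [inner_neg_left] at this
  rw [real_inner_comm]
  linarith
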